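/- arXiv:1705.06999 — 2 statements merged into one kernel-verified Lean document; each statement's English description precedes it below -/
import Mathlib

section
/- Let u, v : Ω → ℝ be smooth and satisfy ∂₂u = ∂₁v and u₃·v₄ − u₄·v₃ = 1 identically on Ω. Then for every λ ∈ ℝ the vector fields X = u₃∂₄ − u₄∂₃ + λ∂₁ and Y = −v₃∂₄ + v₄∂₃ − λ∂₂ on Ω commute: [X, Y] = 0. -/
/-- Partial derivative of `F : ℝ⁴ → ℝ` in the `i`-th coordinate direction. -/
noncomputable def pd (i : Fin 4) (F : (Fin 4 → ℝ) → ℝ) : (Fin 4 → ℝ) → ℝ :=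
  fun x => fderiv ℝ F x (Pi.single i 1)

/-- Lie bracket of two vector fields on ℝ⁴, given by their component functions:
`[X, Y]ⁱ = Σⱼ (Xʲ ∂ⱼYⁱ − Yʲ ∂ⱼXⁱ)`. -/
noncomputable def lieB (X Y : (Fin 4 → ℝ) → (Fin 4 → ℝ)) : (Fin 4 → ℝ) → (Fin 4 → ℝ) :=
  fun x i => ∑ j : Fin 4, (X x j * pd j (fun y => Y y i) x - Y x j * pd j (fun y => X y i) x)

lemma le_inf' (n : ℕ) : (n : WithTop ℕ∞) ≤ ((⊤:ℕ∞):WithTop ℕ∞) :=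
  ENat.natCast_le_of_coe_top_le_withTop le_rfl n

lemma fderiv_diff {F : (Fin 4 → ℝ) → ℝ} {x : Fin 4 → ℝ}
    (hF : ContDiffAt ℝ (⊤ : ℕ∞) F x) : DifferentiableAt ℝ (fderiv ℝ F) x :=
  (hF.fderiv_right (m := 1)
    (by rw [one_add_one_eq_two]; exact_mod_cast le_inf' 2)).differentiableAt one_ne_zero

lemma pd_diff {F : (Fin 4 → ℝ) → ℝ} {x : Fin 4 → ℝ}
    (hF : ContDiffAt ℝ (⊤ : ℕ∞) F x) (i : Fin 4) : DifferentiableAt ℝ (pd i F) x :=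
  (fderiv_diff hF).clm_apply (differentiableAt_const _)

lemma pd_pd {F : (Fin 4 → ℝ) → ℝ} {x : Fin 4 → ℝ}
    (hF : ContDiffAt ℝ (⊤ : ℕ∞) F x) (i j : Fin 4) :
    pd i (pd j F) x = fderiv ℝ (fderiv ℝ F) x (Pi.single i 1) (Pi.single j 1) := by
  show fderiv ℝ (fun y => fderiv ℝ F y (Pi.single j 1)) x (Pi.single i 1) = _
  rw [fderiv_clm_apply (fderiv_diff hF) (differentiableAt_const _)]
  simp

lemma pd_swap {F : (Fin 4 → ℝ) → ℝ} {x : Fin 4 → ℝ}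
    (hF : ContDiffAt ℝ (⊤ : ℕ∞) F x) (i j : Fin 4) :
    pd i (pd j F) x = pd j (pd i F) x := by
  rw [pd_pd hF i j, pd_pd hF j i]
  exact (hF.isSymmSndFDerivAt (by rw [minSmoothness_of_isRCLikeNormedField]; exact_mod_cast le_inf' 2)) _ _

lemma pd_congr {F G : (Fin 4 → ℝ) → ℝ} {x : Fin 4 → ℝ} (h : F =ᶠ[nhds x] G) (i : Fin 4) :
    pd i F x = pd i G x := by
  unfold pd; rw [h.fderiv_eq]

lemma pd_const (i : Fin 4) (c : ℝ) (x : Fin 4 → ℝ) : pd i (fun _ => c) x = 0 := by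
  simp [pd]

lemma pd_neg (i : Fin 4) (f : (Fin 4 → ℝ) → ℝ) (x : Fin 4 → ℝ) :
    pd i (fun y => -(f y)) x = -(pd i f x) := by
  simp [pd, fderiv_neg]

lemma pd_sub {f g : (Fin 4 → ℝ) → ℝ} {x : Fin 4 → ℝ} (hf : DifferentiableAt ℝ f x)
    (hg : DifferentiableAt ℝ g x) (i : Fin 4) :
    pd i (fun y => f y - g y) x = pd i f x - pd i g x := by
  simp [pd, fderiv_fun_sub hf hg]

lemma pd_mul {f g : (Fin 4 → ℝ) → ℝ} {x : Fin 4 → ℝ} (hf : DifferentiableAt ℝ f x)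
    (hg : DifferentiableAt ℝ g x) (i : Fin 4) :
    pd i (fun y => f y * g y) x = f x * pd i g x + g x * pd i f x := by
  simp [pd, fderiv_fun_mul hf hg]

/-- The vector fields `X = u₃∂₄ − u₄∂₃ + λ∂₁`, `Y = −v₃∂₄ + v₄∂₃ − λ∂₂` form a Lax pair for
the first heavenly system `u₂ = v₁`, `u₃v₄ − u₄v₃ = 1`: on any solution they commute for
every `λ`.  Coordinates `x¹,…,x⁴` are indexed by `0,…,3`. -/
theorem statement2 (Ω : Set (Fin 4 → ℝ)) (hΩ : IsOpen Ω)
    (u v : (Fin 4 → ℝ) → ℝ)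
    (hu : ContDiffOn ℝ (⊤ : ℕ∞) u Ω) (hv : ContDiffOn ℝ (⊤ : ℕ∞) v Ω)
    (h1 : ∀ x ∈ Ω, pd 1 u x = pd 0 v x)
    (h2 : ∀ x ∈ Ω, pd 2 u x * pd 3 v x - pd 3 u x * pd 2 v x = 1)
    (lam : ℝ) :
    ∀ x ∈ Ω,
      lieB (fun y => ![lam, 0, -(pd 3 u y), pd 2 u y])
           (fun y => ![0, -lam, pd 3 v y, -(pd 2 v y)]) x = 0 := by
  intro x hx
  have hmem : Ω ∈ nhds x := hΩ.mem_nhds hx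
  have hux : ContDiffAt ℝ (⊤ : ℕ∞) u x := hu.contDiffAt hmem
  have hvx : ContDiffAt ℝ (⊤ : ℕ∞) v x := hv.contDiffAt hmem
  have hdu : ∀ i : Fin 4, DifferentiableAt ℝ (pd i u) x := fun i => pd_diff hux i
  have hdv : ∀ i : Fin 4, DifferentiableAt ℝ (pd i v) x := fun i => pd_diff hvx i
  -- differentiated first equation
  have hB : ∀ j : Fin 4, pd j (pd 1 u) x = pd j (pd 0 v) x := fun j =>
    pd_congr (Filter.eventuallyEq_of_mem hmem h1) j
  -- differentiated second equation
  have hC : ∀ j : Fin 4,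
      pd 2 u x * pd j (pd 3 v) x + pd 3 v x * pd j (pd 2 u) x
        - (pd 3 u x * pd j (pd 2 v) x + pd 2 v x * pd j (pd 3 u) x) = 0 := by
    intro j
    have e : pd j (fun y => pd 2 u y * pd 3 v y - pd 3 u y * pd 2 v y) x
        = pd j (fun _ => (1 : ℝ)) x := pd_congr (Filter.eventuallyEq_of_mem hmem h2) j
    rw [pd_const] at e
    rw [pd_sub (f := fun y => pd 2 u y * pd 3 v y) (g := fun y => pd 3 u y * pd 2 v y) ((hdu 2).mul (hdv 3)) ((hdu 3).mul (hdv 2)),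
      pd_mul (hdu 2) (hdv 3), pd_mul (hdu 3) (hdv 2)] at e
    linarith
  have hC2 := hC 2
  have hC3 := hC 3
  rw [pd_swap hux 3 2, pd_swap hvx 3 2] at hC3
  rw [pd_swap hux 2 3, pd_swap hvx 2 3] at hC2
  -- note: after the rewrites both hC3 and hC2 are in terms of mixed partials
  have e12 : pd 0 (pd 3 v) x = pd 1 (pd 3 u) x := by
    rw [pd_swap hvx 0 3, ← hB 3, pd_swap hux 3 1]
  have e13 : pd 0 (pd 2 v) x = pd 1 (pd 2 u) x := by
    rw [pd_swap hvx 0 2, ← hB 2, pd_swap hux 2 1]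
  funext i
  fin_cases i <;>
    simp [lieB, Fin.sum_univ_four, pd_const, pd_neg]
  · linear_combination lam * e12 + hC3
  · linear_combination (-lam) * e13 - hC2
end

section
/- Let v : Ω → ℝ be smooth. Then v satisfies v₂₃ + v₂·v₁₄ − v₄·v₁₂ = 0 identically on Ω if and only if for every λ ∈ ℝ the vector fields X = ∂₂ + λ·v₂·∂₁ and Y = ∂₄ − λ·∂₃ + λ·v₄·∂₁ on Ω commute: [X, Y] = 0. -/
lemma pd_const_mul (i : Fin 4) (c : ℝ) (f : (Fin 4 → ℝ) → ℝ) (x : Fin 4 → ℝ)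
    (hf : DifferentiableAt ℝ f x) :
    pd i (fun y => c * f y) x = c * pd i f x := by
  simp [pd, fderiv_const_mul hf]

lemma pd_pd_eq (v : (Fin 4 → ℝ) → ℝ) (x : Fin 4 → ℝ)
    (hdf : DifferentiableAt ℝ (fderiv ℝ v) x) (i j : Fin 4) :
    pd j (pd i v) x = fderiv ℝ (fderiv ℝ v) x (Pi.single j 1) (Pi.single i 1) := by
  have h := fderiv_comp x
    ((ContinuousLinearMap.apply ℝ ℝ (Pi.single (M := fun _ : Fin 4 => ℝ) i 1)).differentiableAt)
    hdf
  have h2 : pd i v = (ContinuousLinearMap.apply ℝ ℝ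
      (Pi.single (M := fun _ : Fin 4 => ℝ) i 1)) ∘ fderiv ℝ v := rfl
  rw [pd, h2, h]
  simp

/-- `v` satisfies `v₂₃ + v₂v₁₄ − v₄v₁₂ = 0` on `Ω` iff for every `λ` the vector fields
`X = ∂₂ + λv₂∂₁` and `Y = ∂₄ − λ∂₃ + λv₄∂₁` commute on `Ω`
(dispersionless Lax pair of the Segre type [31] system).
Coordinates `x¹,…,x⁴` are indexed by `0,…,3`. -/
theorem statement6 (Ω : Set (Fin 4 → ℝ)) (hΩ : IsOpen Ω)
    (v : (Fin 4 → ℝ) → ℝ) (hv : ContDiffOn ℝ (⊤ : ℕ∞) v Ω) :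
    (∀ x ∈ Ω,
        pd 2 (pd 1 v) x + pd 1 v x * pd 3 (pd 0 v) x - pd 3 v x * pd 1 (pd 0 v) x = 0) ↔
    (∀ lam : ℝ, ∀ x ∈ Ω,
        lieB (fun y => ![lam * pd 1 v y, 1, 0, 0])
             (fun y => ![lam * pd 3 v y, 0, -lam, 1]) x = 0) := by
  -- preliminary facts at points of Ω
  have key : ∀ lam : ℝ, ∀ x ∈ Ω,
      lieB (fun y => ![lam * pd 1 v y, 1, 0, 0])
           (fun y => ![lam * pd 3 v y, 0, -lam, 1]) x
      = fun i => if i = 0 then lam ^ 2 *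
          (pd 2 (pd 1 v) x + pd 1 v x * pd 3 (pd 0 v) x - pd 3 v x * pd 1 (pd 0 v) x) else 0 := by
    intro lam x hx
    have hvx : ContDiffAt ℝ (⊤ : ℕ∞) v x := hv.contDiffAt (hΩ.mem_nhds hx)
    have hdf : DifferentiableAt ℝ (fderiv ℝ v) x := by
      have : ContDiffAt ℝ 1 (fderiv ℝ v) x :=
        hvx.fderiv_right (le_of_eq_of_le (by norm_cast) (WithTop.coe_le_coe.mpr (le_top : (2:ℕ∞) ≤ ⊤)))
      exact this.differentiableAt one_ne_zero
    have hdpd : ∀ i : Fin 4, DifferentiableAt ℝ (pd i v) x := by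
      intro i
      exact hdf.clm_apply (differentiableAt_const _)
    have hsymm : IsSymmSndFDerivAt ℝ v x :=
      hvx.isSymmSndFDerivAt (le_of_eq_of_le (by rw [minSmoothness_of_isRCLikeNormedField]; norm_cast) (WithTop.coe_le_coe.mpr (le_top : (2:ℕ∞) ≤ ⊤)))
    have hswap : ∀ i j : Fin 4, pd j (pd i v) x = pd i (pd j v) x := by
      intro i j
      rw [pd_pd_eq v x hdf, pd_pd_eq v x hdf]
      exact hsymm _ _
    funext i
    fin_cases i
    · -- component 0
      show (∑ j : Fin 4, _) = _
      rw [Fin.sum_univ_four]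
      simp only [Fin.zero_eta, Fin.mk_one, Fin.isValue, Matrix.cons_val_zero,
        Matrix.cons_val_one, Matrix.head_cons, Matrix.cons_val_two, Matrix.tail_cons,
        Matrix.cons_val_three, Matrix.head_fin_const]
      rw [pd_const_mul _ _ _ _ (hdpd 3), pd_const_mul _ _ _ _ (hdpd 1),
          pd_const_mul _ _ _ _ (hdpd 3), pd_const_mul _ _ _ _ (hdpd 1),
          pd_const_mul _ _ _ _ (hdpd 3), pd_const_mul _ _ _ _ (hdpd 1),
          pd_const_mul _ _ _ _ (hdpd 3), pd_const_mul _ _ _ _ (hdpd 1)]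
      rw [hswap 3 0, hswap 1 0, hswap 3 1]
      simp only [if_true]
      ring
    · show (∑ j : Fin 4, _) = _
      rw [Fin.sum_univ_four]
      simp [pd_const]
    · show (∑ j : Fin 4, _) = _
      rw [Fin.sum_univ_four]
      simp [pd_const]
    · show (∑ j : Fin 4, _) = _
      rw [Fin.sum_univ_four]
      simp [pd_const]
  constructor
  · intro h lam x hx
    rw [key lam x hx]
    funext i
    by_cases hi : i = 0 <;> simp [hi, h x hx]
  · intro h x hx
    have := h 1 x hx
    rw [key 1 x hx] at this
    have h0 := congrFun this 0
    simpa using h0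
end
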